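/- Let k[x_0, x_1] be a polynomial ring over a field k in which n+1 is invertible and which contains the (n+1)-th roots of unity. Consider the group Γ = μ_{n+1} ⋊ ℤ/2 acting by ζ·(x_0,x_1) = (ζ x_0, ζ^{-1} x_1) and τ·(x_0,x_1) = (x_1,x_0). Then the ring of invariants k[x_0,x_1]^Γ is the polynomial ring k[s, v] on the two algebraically independent elements s = x_0^{n+1} + x_1^{n+1} and v = x_0 x_1. -/

import Mathlib

open MvPolynomial

namespace Stmt10Aux

variable {k : Type*} [Field k]

/-- abbreviation for the target subalgebra -/
noncomputable def AA (k : Type*) [Field k] (n : ℕ) : Subalgebra k (MvPolynomial (Fin 2) k) :=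
  Algebra.adjoin k {X 0 ^ (n + 1) + X 1 ^ (n + 1), X 0 * X 1}

lemma s_mem (n : ℕ) : (X 0 ^ (n+1) + X 1 ^ (n+1) : MvPolynomial (Fin 2) k) ∈ AA k n :=
  Algebra.subset_adjoin (Set.mem_insert _ _)

lemma v_mem (n : ℕ) : (X 0 * X 1 : MvPolynomial (Fin 2) k) ∈ AA k n :=
  Algebra.subset_adjoin (Set.mem_insert_of_mem _ rfl)

lemma powsum_mem (n m : ℕ) :
    (X 0 ^ ((n+1)*m) + X 1 ^ ((n+1)*m) : MvPolynomial (Fin 2) k) ∈ AA k n := by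
  induction m using Nat.strong_induction_on with
  | _ m ih =>
    match m with
    | 0 => simpa using add_mem (one_mem (AA k n)) (one_mem (AA k n))
    | 1 => simpa using s_mem n
    | (m+2) =>
      have key : (X 0 ^ ((n+1)*(m+2)) + X 1 ^ ((n+1)*(m+2)) : MvPolynomial (Fin 2) k)
          = (X 0 ^ (n+1) + X 1 ^ (n+1)) * (X 0 ^ ((n+1)*(m+1)) + X 1 ^ ((n+1)*(m+1)))
            - (X 0 * X 1)^(n+1) * (X 0 ^ ((n+1)*m) + X 1 ^ ((n+1)*m)) := by
        have e2 : (n+1)*(m+2) = (n+1)*m + (n+1) + (n+1) := by ring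
        have e1 : (n+1)*(m+1) = (n+1)*m + (n+1) := by ring
        rw [e1, e2]
        ring
      rw [key]
      exact sub_mem (mul_mem (s_mem n) (ih (m+1) (by omega)))
        (mul_mem (pow_mem (v_mem n) _) (ih m (by omega)))

lemma pair_mem (n b m : ℕ) :
    (X 0 ^ (b + (n+1)*m) * X 1 ^ b + X 0 ^ b * X 1 ^ (b + (n+1)*m) :
      MvPolynomial (Fin 2) k) ∈ AA k n := by
  have key : (X 0 ^ (b + (n+1)*m) * X 1 ^ b + X 0 ^ b * X 1 ^ (b + (n+1)*m) :
      MvPolynomial (Fin 2) k)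
      = (X 0 * X 1)^b * (X 0 ^ ((n+1)*m) + X 1 ^ ((n+1)*m)) := by ring
  rw [key]
  exact mul_mem (pow_mem (v_mem n) _) (powsum_mem n m)

lemma monomial_eq_prod (d : Fin 2 →₀ ℕ) (c : k) :
    (monomial d c : MvPolynomial (Fin 2) k) = C c * (X 0 ^ d 0 * X 1 ^ d 1) := by
  rw [monomial_eq, Finsupp.prod_fintype _ _ (fun i => pow_zero _), Fin.prod_univ_two]

lemma pair_mem' (n a b : ℕ) (hmod : a ≡ b [MOD n+1]) (c : k) :
    (C c * (X 0 ^ a * X 1 ^ b) + C c * (X 0 ^ b * X 1 ^ a) :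
      MvPolynomial (Fin 2) k) ∈ AA k n := by
  have hC : (C c : MvPolynomial (Fin 2) k) ∈ AA k n := by
    rw [← algebraMap_eq]; exact Subalgebra.algebraMap_mem _ _
  rcases le_total b a with hab | hab
  · obtain ⟨m, hm⟩ := (Nat.modEq_iff_dvd' hab).mp hmod.symm
    have ha : a = b + (n+1)*m := by omega
    subst ha
    have key : (C c * (X 0 ^ (b + (n+1)*m) * X 1 ^ b) + C c * (X 0 ^ b * X 1 ^ (b + (n+1)*m)) :
        MvPolynomial (Fin 2) k)
        = C c * (X 0 ^ (b + (n+1)*m) * X 1 ^ b + X 0 ^ b * X 1 ^ (b + (n+1)*m)) := by ring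
    rw [key]
    exact mul_mem hC (pair_mem n b m)
  · obtain ⟨m, hm⟩ := (Nat.modEq_iff_dvd' hab).mp hmod
    have hb : b = a + (n+1)*m := by omega
    subst hb
    have key : (C c * (X 0 ^ a * X 1 ^ (a + (n+1)*m)) + C c * (X 0 ^ (a + (n+1)*m) * X 1 ^ a) :
        MvPolynomial (Fin 2) k)
        = C c * (X 0 ^ (a + (n+1)*m) * X 1 ^ a + X 0 ^ a * X 1 ^ (a + (n+1)*m)) := by ring
    rw [key]
    exact mul_mem hC (pair_mem n a m)

lemma coeff_aeval_scale (c0 c1 : k) (p : MvPolynomial (Fin 2) k) (d : Fin 2 →₀ ℕ) :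
    coeff d (aeval (fun i : Fin 2 => C (if i = 0 then c0 else c1) * X i) p)
      = c0 ^ d 0 * c1 ^ d 1 * coeff d p := by
  induction p using MvPolynomial.induction_on' with
  | monomial d' a =>
    have key : aeval (fun i : Fin 2 => C (if i = 0 then c0 else c1) * X i)
        (monomial d' a : MvPolynomial (Fin 2) k)
        = monomial d' (c0 ^ d' 0 * c1 ^ d' 1 * a) := by
      rw [aeval_monomial, Finsupp.prod_fintype _ _ (fun i => pow_zero _), Fin.prod_univ_two,
        monomial_eq_prod]
      simp only [if_pos, reduceIte, mul_pow, ← C_pow, algebraMap_eq, Fin.isValue, one_ne_zero,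
        C_mul]
      ring
    rw [key, coeff_monomial, coeff_monomial]
    split_ifs with h
    · subst h; ring
    · ring
  | add p q hp hq =>
    rw [map_add, coeff_add, coeff_add, mul_add, hp, hq]

noncomputable def sw (d : Fin 2 →₀ ℕ) : Fin 2 →₀ ℕ :=
  Finsupp.mapDomain (⇑(Equiv.swap (0 : Fin 2) 1)) d

lemma sw_apply0 (d : Fin 2 →₀ ℕ) : sw d 0 = d 1 := by
  rw [sw, Finsupp.mapDomain_equiv_apply]; simp

lemma sw_apply1 (d : Fin 2 →₀ ℕ) : sw d 1 = d 0 := by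
  rw [sw, Finsupp.mapDomain_equiv_apply]; simp

lemma sw_sw (e : Fin 2 →₀ ℕ) : sw (sw e) = e := by
  rw [sw, sw, ← Finsupp.mapDomain_comp]
  have h : (⇑(Equiv.swap (0 : Fin 2) 1)) ∘ (⇑(Equiv.swap (0 : Fin 2) 1)) = id := by
    funext x; simp [Equiv.swap_apply_self]
  rw [h, Finsupp.mapDomain_id]

lemma sw_inj {e1 e2 : Fin 2 →₀ ℕ} : sw e1 = sw e2 ↔ e1 = e2 :=
  ⟨fun h => by rw [← sw_sw e1, h, sw_sw], fun h => by rw [h]⟩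

lemma sw_flip {e1 e2 : Fin 2 →₀ ℕ} : e1 = sw e2 ↔ sw e1 = e2 :=
  ⟨fun h => by rw [h, sw_sw], fun h => by rw [← h, sw_sw]⟩

lemma fin2_ext {f g : Fin 2 →₀ ℕ} (h0 : f 0 = g 0) (h1 : f 1 = g 1) : f = g :=
  Finsupp.ext fun a => by fin_cases a <;> assumption

lemma mem_adjoin_of_sym (n : ℕ) (N : ℕ) : ∀ (q : MvPolynomial (Fin 2) k),
    q.support.card ≤ N →
    (∀ d ∈ q.support, d 0 ≡ d 1 [MOD (n+1)]) →
    (∀ d : Fin 2 →₀ ℕ, coeff (sw d) q = coeff d q) →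
    q ∈ AA k n := by
  induction N with
  | zero =>
    intro q hcard _ _
    have h : q.support = ∅ := Finset.card_eq_zero.mp (Nat.le_antisymm hcard (Nat.zero_le _))
    rw [support_eq_empty.mp h]
    exact zero_mem _
  | succ N ih =>
    intro q hcard hmod hsym
    rcases eq_or_ne q 0 with rfl | hq
    · exact zero_mem _
    obtain ⟨d, hd⟩ := support_nonempty.mpr hq
    set c := coeff d q with hc
    have hc0 : c ≠ 0 := mem_support_iff.mp hd
    -- the symmetric "pair" polynomial r
    set r : MvPolynomial (Fin 2) k :=
      (if d 0 = d 1 then monomial d c else monomial d c + monomial (sw d) c) with hr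
    -- facts about r
    have hswd_mem : sw d ∈ q.support := by
      rw [mem_support_iff, hsym d]; exact hc0
    have hrcoeff_zero : ∀ e : Fin 2 →₀ ℕ, e ≠ d → e ≠ sw d → coeff e r = 0 := by
      intro e h1 h2
      rw [hr]
      split_ifs with h
      · rw [coeff_monomial, if_neg (fun hh => h1 hh.symm)]
      · rw [coeff_add, coeff_monomial, coeff_monomial, if_neg (fun hh => h1 hh.symm),
          if_neg (fun hh => h2 hh.symm), add_zero]
    have hrd : coeff d r = c := by
      rw [hr]
      split_ifs with h
      · rw [coeff_monomial, if_pos rfl]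
      · have hne : sw d ≠ d := by
          intro hh
          exact h (by rw [← sw_apply0 d, hh])
        rw [coeff_add, coeff_monomial, coeff_monomial, if_pos rfl, if_neg hne, add_zero]
    have hrsym : ∀ e : Fin 2 →₀ ℕ, coeff (sw e) r = coeff e r := by
      intro e
      rw [hr]
      split_ifs with h
      · have hfix : sw d = d := fin2_ext (by rw [sw_apply0, h]) (by rw [sw_apply1, h])
        rw [coeff_monomial, coeff_monomial]
        have hiff : d = sw e ↔ d = e := by
          rw [← hfix, sw_inj, hfix]
        rw [if_congr hiff rfl rfl]
      · rw [coeff_add, coeff_add, coeff_monomial, coeff_monomial, coeff_monomial,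
          coeff_monomial, if_congr (sw_flip (e1 := d) (e2 := e)) rfl rfl,
          if_congr (sw_inj (e1 := d) (e2 := e)) rfl rfl]
        exact add_comm _ _
    have hrmem : r ∈ AA k n := by
      rw [hr]
      split_ifs with h
      · rw [monomial_eq_prod, ← h, ← mul_pow]
        exact mul_mem (by rw [← algebraMap_eq]; exact Subalgebra.algebraMap_mem _ _)
          (pow_mem (v_mem n) _)
      · rw [monomial_eq_prod, monomial_eq_prod (sw d) c, sw_apply0, sw_apply1]
        exact pair_mem' n (d 0) (d 1) (hmod d hd) c
    -- the remainder q - r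
    have hsub_supp : (q - r).support ⊆ q.support := by
      intro e he
      rw [mem_support_iff] at he ⊢
      rcases eq_or_ne e d with rfl | h1
      · exact hc0
      rcases eq_or_ne e (sw d) with rfl | h2
      · rw [hsym d]; exact hc0
      · rw [coeff_sub, hrcoeff_zero e h1 h2, sub_zero] at he
        exact he
    have hd_not : d ∉ (q - r).support := by
      rw [mem_support_iff, coeff_sub, hrd, ← hc, sub_self]
      exact fun h => h rfl
    have hcard' : (q - r).support.card ≤ N := by
      have hss : (q - r).support ⊂ q.support :=
        ⟨hsub_supp, fun hsub => hd_not (hsub hd)⟩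
      have := Finset.card_lt_card hss
      omega
    have hmem' : q - r ∈ AA k n := by
      apply ih (q - r) hcard'
      · intro e he; exact hmod e (hsub_supp he)
      · intro e; rw [coeff_sub, coeff_sub, hsym e, hrsym e]
    have : q = (q - r) + r := by ring
    rw [this]
    exact add_mem hmem' hrmem

lemma support_mod (n : ℕ) (hroots : ∃ ζ : k, IsPrimitiveRoot ζ (n + 1))
    (p : MvPolynomial (Fin 2) k)
    (h1 : ∀ ζ : kˣ, ζ ^ (n + 1) = 1 →
      aeval (fun i : Fin 2 =>
        C (if i = 0 then (ζ : k) else ((ζ⁻¹ : kˣ) : k)) * X i) p = p) :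
    ∀ d ∈ p.support, d 0 ≡ d 1 [MOD (n+1)] := by
  intro d hd
  obtain ⟨ζ, hζ⟩ := hroots
  have hNpos : 0 < n + 1 := n.succ_pos
  set u := (hζ.isUnit hNpos.ne').unit with hu_def
  have hu : IsPrimitiveRoot u (n+1) := hζ.isUnit_unit hNpos.ne'
  have hu1 : u ^ (n+1) = 1 := hu.pow_eq_one
  have hcong := congrArg (coeff d) (h1 u hu1)
  rw [coeff_aeval_scale] at hcong
  have hcoeff : coeff d p ≠ 0 := mem_support_iff.mp hd
  have key : ((u : k)) ^ (d 0) * (((u⁻¹ : kˣ)) : k) ^ (d 1) = 1 :=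
    mul_right_cancel₀ hcoeff (by rw [hcong, one_mul])
  have keyu : u ^ (d 0) * u⁻¹ ^ (d 1) = 1 := Units.ext (by push_cast [Units.val_inv_eq_inv_val] at key ⊢; exact key)
  have hpow : u ^ (d 0) = u ^ (d 1) := by
    rw [inv_pow] at keyu
    exact mul_inv_eq_one.mp keyu
  have := pow_eq_pow_iff_modEq.mp hpow
  rwa [← hu.eq_orderOf] at this


lemma inv_of_mem_scale (n : ℕ) (p : MvPolynomial (Fin 2) k)
    (hp : p ∈ Algebra.adjoin k {(X 0 ^ (n + 1) + X 1 ^ (n + 1) : MvPolynomial (Fin 2) k),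
      X 0 * X 1})
    (ζ : kˣ) (hζ : ζ ^ (n + 1) = 1) :
    aeval (fun i : Fin 2 =>
      C (if i = 0 then (ζ : k) else ((ζ⁻¹ : kˣ) : k)) * X i) p = p := by
  have hz : ((ζ : k)) ^ (n+1) = 1 := by
    have := congrArg (Units.val) hζ
    push_cast at this
    exact this
  have hz' : (((ζ⁻¹ : kˣ)) : k) ^ (n+1) = 1 := by
    have h : ((ζ : k))⁻¹ ^ (n+1) = 1 := by rw [inv_pow, hz, inv_one]
    rw [Units.val_inv_eq_inv_val]
    exact h
  induction hp using Algebra.adjoin_induction with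
  | mem x hx =>
    rcases hx with rfl | rfl
    · rw [map_add, map_pow, map_pow, aeval_X, aeval_X]
      simp only [reduceIte, Fin.isValue, one_ne_zero]
      rw [mul_pow, mul_pow, ← C_pow, ← C_pow, hz, hz', map_one, one_mul, one_mul]
    · rw [map_mul, aeval_X, aeval_X]
      simp only [reduceIte, Fin.isValue, one_ne_zero]
      have : (C (ζ : k) * X 0 * (C ((ζ⁻¹ : kˣ) : k) * X 1) : MvPolynomial (Fin 2) k)
          = C ((ζ : k) * ((ζ⁻¹ : kˣ) : k)) * (X 0 * X 1) := by rw [C_mul]; ring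
      rw [this]
      have h1 : (ζ : k) * ((ζ⁻¹ : kˣ) : k) = 1 := by
        push_cast [Units.val_inv_eq_inv_val]
        exact mul_inv_cancel₀ (Units.ne_zero ζ)
      rw [h1, map_one, one_mul]
  | algebraMap r => exact aeval_C _ r
  | add x y _ _ hx hy => rw [map_add, hx, hy]
  | mul x y _ _ hx hy => rw [map_mul, hx, hy]

lemma inv_of_mem_swap (n : ℕ) (p : MvPolynomial (Fin 2) k)
    (hp : p ∈ Algebra.adjoin k {(X 0 ^ (n + 1) + X 1 ^ (n + 1) : MvPolynomial (Fin 2) k),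
      X 0 * X 1}) :
    rename (⇑(Equiv.swap (0 : Fin 2) 1)) p = p := by
  induction hp using Algebra.adjoin_induction with
  | mem x hx =>
    rcases hx with rfl | rfl
    · rw [map_add, map_pow, map_pow, rename_X, rename_X, Equiv.swap_apply_left,
        Equiv.swap_apply_right]
      exact add_comm _ _
    · rw [map_mul, rename_X, rename_X, Equiv.swap_apply_left, Equiv.swap_apply_right]
      exact mul_comm _ _
  | algebraMap r => rw [algebraMap_eq, rename_C]
  | add x y _ _ hx hy => rw [map_add, hx, hy]
  | mul x y _ _ hx hy => rw [map_mul, hx, hy]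


lemma coeff_aeval_X0_zero (P : MvPolynomial (Fin 2) k) (a : ℕ) :
    Polynomial.coeff (aeval (![Polynomial.X, 0] : Fin 2 → Polynomial k) P) a
      = coeff (Finsupp.single 0 a) P := by
  induction P using MvPolynomial.induction_on' with
  | monomial d c =>
    rw [aeval_monomial, Finsupp.prod_fintype _ _ (fun i => pow_zero _), Fin.prod_univ_two]
    simp only [Matrix.cons_val_zero, Matrix.cons_val_one, Matrix.head_cons]
    rcases eq_or_ne (d 1) 0 with h | h
    · rw [h, pow_zero, mul_one, Polynomial.algebraMap_eq, Polynomial.coeff_C_mul,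
        Polynomial.coeff_X_pow, coeff_monomial]
      have hiff : (d = Finsupp.single 0 a) ↔ (d 0 = a) := by
        constructor
        · intro hh; rw [hh]; simp
        · intro hh; exact fin2_ext (by simp [hh]) (by simp [h])
      by_cases hda : a = d 0
      · rw [if_pos hda, mul_one, if_pos (hiff.mpr hda.symm)]
      · rw [if_neg hda, mul_zero, if_neg (fun hh => hda (hiff.mp hh).symm)]
    · rw [zero_pow h, mul_zero, mul_zero, Polynomial.coeff_zero, coeff_monomial,
        if_neg (fun hh => h (by rw [hh]; simp))]
  | add p q hp hq =>
    rw [map_add, Polynomial.coeff_add, coeff_add, hp, hq]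

lemma X1_dvd (P : MvPolynomial (Fin 2) k)
    (h : ∀ a : ℕ, coeff (Finsupp.single 0 a) P = 0) :
    (X 1 : MvPolynomial (Fin 2) k) ∣ P := by
  conv_rhs => rw [as_sum P]
  apply Finset.dvd_sum
  intro d hd
  rcases eq_or_ne (d 1) 0 with h1 | h1
  · have hd0 : d = Finsupp.single 0 (d 0) := fin2_ext (by simp) (by simp [h1])
    have hz : coeff d P = 0 := by rw [hd0]; exact h (d 0)
    rw [hz, map_zero]
    exact dvd_zero _
  · refine ⟨monomial (d - Finsupp.single 1 1) (coeff d P), ?_⟩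
    have hX : (X 1 : MvPolynomial (Fin 2) k) = monomial (Finsupp.single 1 1) 1 := by
      rw [← X_pow_eq_monomial, pow_one]
    have hd' : (Finsupp.single 1 1 + (d - Finsupp.single 1 1) : Fin 2 →₀ ℕ) = d := by
      apply fin2_ext
      · simp
      · simp only [Finsupp.coe_add, Finsupp.coe_tsub, Pi.add_apply, Pi.sub_apply,
          Finsupp.single_eq_same]
        omega
    rw [hX, monomial_mul, one_mul, hd']


lemma step_dvd (n : ℕ) (P : MvPolynomial (Fin 2) k)
    (hP : aeval (![X 0 ^ (n+1) + X 1 ^ (n+1), X 0 * X 1] :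
      Fin 2 → MvPolynomial (Fin 2) k) P = 0) :
    (X 1 : MvPolynomial (Fin 2) k) ∣ P := by
  have comp1 : (aeval (![X 0, 0] : Fin 2 → MvPolynomial (Fin 2) k)).comp
      (aeval (![X 0 ^ (n+1) + X 1 ^ (n+1), X 0 * X 1] : Fin 2 → MvPolynomial (Fin 2) k))
      = aeval (![X 0 ^ (n+1), 0] : Fin 2 → MvPolynomial (Fin 2) k) := by
    apply algHom_ext
    intro i
    fin_cases i <;>
      simp [zero_pow (Nat.succ_ne_zero n)]
  have comp2 : (Polynomial.aeval (X 0 ^ (n+1) : MvPolynomial (Fin 2) k)).comp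
      (aeval (![Polynomial.X, 0] : Fin 2 → Polynomial k))
      = aeval (![X 0 ^ (n+1), 0] : Fin 2 → MvPolynomial (Fin 2) k) := by
    apply algHom_ext
    intro i
    fin_cases i <;> simp
  have h1 : aeval (![X 0 ^ (n+1), 0] : Fin 2 → MvPolynomial (Fin 2) k) P = 0 := by
    rw [← comp1, AlgHom.comp_apply, hP, map_zero]
  have htr : Transcendental k (X (0 : Fin 2) ^ (n+1) : MvPolynomial (Fin 2) k) :=
    (MvPolynomial.transcendental_X k (0 : Fin 2)).pow n.succ_pos
  have hinj := transcendental_iff_injective.mp htr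
  have h2 : aeval (![Polynomial.X, 0] : Fin 2 → Polynomial k) P = 0 := by
    apply hinj
    rw [map_zero, ← AlgHom.comp_apply, comp2, h1]
  apply X1_dvd
  intro a
  rw [← coeff_aeval_X0_zero, h2, Polynomial.coeff_zero]

lemma descent (n : ℕ) (M : ℕ) : ∀ P : MvPolynomial (Fin 2) k, degreeOf 1 P ≤ M →
    aeval (![X 0 ^ (n+1) + X 1 ^ (n+1), X 0 * X 1] :
      Fin 2 → MvPolynomial (Fin 2) k) P = 0 → P = 0 := by
  induction M with
  | zero =>
    intro P hdeg hrel
    obtain ⟨Q, hQ⟩ := step_dvd n P hrel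
    rcases eq_or_ne Q 0 with rfl | hQ0
    · rw [hQ, mul_zero]
    · exfalso
      have : degreeOf 1 (Q * X 1) = degreeOf 1 Q + 1 :=
        (degreeOf_mul_X_eq_degreeOf_add_one_iff 1 Q).mpr hQ0
      rw [hQ, mul_comm] at hdeg
      omega
  | succ M ih =>
    intro P hdeg hrel
    obtain ⟨Q, hQ⟩ := step_dvd n P hrel
    rcases eq_or_ne Q 0 with rfl | hQ0
    · rw [hQ, mul_zero]
    · have hdQ : degreeOf 1 (Q * X 1) = degreeOf 1 Q + 1 :=
        (degreeOf_mul_X_eq_degreeOf_add_one_iff 1 Q).mpr hQ0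
      have hdeg' : degreeOf 1 Q ≤ M := by
        rw [hQ, mul_comm] at hdeg
        omega
      have hrelQ : aeval (![X 0 ^ (n+1) + X 1 ^ (n+1), X 0 * X 1] :
          Fin 2 → MvPolynomial (Fin 2) k) Q = 0 := by
        rw [hQ, map_mul] at hrel
        have hX1 : aeval (R := k) (![X 0 ^ (n+1) + X 1 ^ (n+1), X 0 * X 1] :
            Fin 2 → MvPolynomial (Fin 2) k) (X 1) = X 0 * X 1 := by simp
        rw [hX1] at hrel
        have hv : (X 0 * X 1 : MvPolynomial (Fin 2) k) ≠ 0 :=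
          mul_ne_zero (X_ne_zero _) (X_ne_zero _)
        rcases mul_eq_zero.mp hrel with h | h
        · exact absurd h hv
        · exact h
      rw [hQ, ih Q hdeg' hrelQ, mul_zero]


end Stmt10Aux

open Stmt10Aux in
/-- for the action of `Γ = μ_{n+1} ⋊ ℤ/2` on `k[x_0,x_1]` by
`ζ·(x_0,x_1) = (ζx_0, ζ^{-1}x_1)` and `τ·(x_0,x_1) = (x_1,x_0)`, the ring of invariants
is the polynomial ring on the two algebraically independent elements
`s = x_0^{n+1} + x_1^{n+1}` and `v = x_0x_1`. -/
theorem stmt10 (n : ℕ) (k : Type*) [Field k] (hchar : (n + 1 : k) ≠ 0)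
    (hroots : ∃ ζ : k, IsPrimitiveRoot ζ (n + 1)) :
    {p : MvPolynomial (Fin 2) k |
        (∀ ζ : kˣ, ζ ^ (n + 1) = 1 →
          aeval (fun i : Fin 2 =>
            C (if i = 0 then (ζ : k) else ((ζ⁻¹ : kˣ) : k)) * X i) p = p) ∧
        rename (Equiv.swap (0 : Fin 2) 1) p = p}
      = (Algebra.adjoin k {X 0 ^ (n + 1) + X 1 ^ (n + 1), X 0 * X 1} :
          Subalgebra k (MvPolynomial (Fin 2) k)) ∧
    AlgebraicIndependent k
      ![(X 0 ^ (n + 1) + X 1 ^ (n + 1) : MvPolynomial (Fin 2) k), X 0 * X 1] := by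
  constructor
  · ext p
    simp only [Set.mem_setOf_eq, SetLike.mem_coe]
    constructor
    · rintro ⟨h1, h2⟩
      have hsym : ∀ d : Fin 2 →₀ ℕ, coeff (sw d) p = coeff d p := by
        intro d
        have := coeff_rename_mapDomain (⇑(Equiv.swap (0 : Fin 2) 1))
          (Equiv.injective _) p d
        rw [h2] at this
        exact this
      exact mem_adjoin_of_sym n p.support.card p le_rfl
        (support_mod n hroots p h1) hsym
    · intro hp
      exact ⟨fun ζ hζ => inv_of_mem_scale n p hp ζ hζ, inv_of_mem_swap n p hp⟩
  · rw [algebraicIndependent_iff]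
    intro P hP
    exact descent n (degreeOf 1 P) P le_rfl hP
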